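/- Let G=(V,A) be a loopless digraph and ℓ ≥ 1. Then the total number of feedback arc sets of the subdivision digraph H'(ℓ) equals Σ_{i=0}^{|A|} F_i(G)·(2^ℓ − 1)^i, where F_i(G) denotes the number of feedback arc sets of G of cardinality exactly i. -/

import Mathlib

/-- A digraph on vertex type `W` is given by its arc set `A ⊆ W × W`.
It is acyclic when the transitive closure of its arc relation is irreflexive
(equivalently, it has no cycle). -/
def Acyclic {W : Type*} (A : Set (W × W)) : Prop :=
  ∀ v : W, ¬ Relation.TransGen (fun u w => (u, w) ∈ A) v v

/-- `F` is a feedback arc set of the digraph with arc set `A`: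
`F ⊆ A` and the digraph `(V, A \ F)` is acyclic. -/
def IsFAS {W : Type*} (A F : Set (W × W)) : Prop :=
  F ⊆ A ∧ Acyclic (A \ F)

/-- The `i`-th node (for `0 ≤ i ≤ ℓ`) of the subdivision path replacing the arc
`a = (u,v)` in `H'(ℓ)`: node `0` is `u`, node `ℓ` is `v`, and the nodes in
between are the fresh vertices `a_1, …, a_{ℓ-1}`. -/
def HNode {V : Type*} (ℓ : ℕ) (a : V × V) (i : ℕ) : V ⊕ ((V × V) × ℕ) :=
  if i = 0 then Sum.inl a.1 else if i = ℓ then Sum.inl a.2 else Sum.inr (a, i)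

/-- The directed path `P_a` of `ℓ` arcs replacing the arc `a = (u,v)` in
`H'(ℓ)`: `(u,a_1), (a_1,a_2), …, (a_{ℓ-2},a_{ℓ-1}), (a_{ℓ-1},v)`
(for `ℓ = 1`, `P_a = {(u,v)}`). -/
def PathArcs {V : Type*} (ℓ : ℕ) (a : V × V) :
    Set ((V ⊕ ((V × V) × ℕ)) × (V ⊕ ((V × V) × ℕ))) :=
  { p | ∃ i < ℓ, p = (HNode ℓ a i, HNode ℓ a (i + 1)) }

/-- The arc set of the subdivision digraph `H'(ℓ)`: the union of the paths
`P_a` over all arcs `a` of `G`. -/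
def HArcs {V : Type*} (A : Set (V × V)) (ℓ : ℕ) :
    Set ((V ⊕ ((V × V) × ℕ)) × (V ⊕ ((V × V) × ℕ))) :=
  ⋃ a ∈ A, PathArcs ℓ a

namespace FasAux

abbrev HW (V : Type*) := V ⊕ ((V × V) × ℕ)

variable {V : Type*}

lemma hnode_zero (ℓ : ℕ) (a : V × V) : HNode ℓ a 0 = Sum.inl a.1 := by simp [HNode]

lemma hnode_last {ℓ : ℕ} (hℓ : ℓ ≠ 0) (a : V × V) : HNode ℓ a ℓ = Sum.inl a.2 := by
  simp [HNode, hℓ]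

lemma hnode_mid {ℓ i : ℕ} (h0 : i ≠ 0) (hi : i ≠ ℓ) (a : V × V) :
    HNode ℓ a i = Sum.inr (a, i) := by simp [HNode, h0, hi]

lemma hnode_eq_inr {ℓ i : ℕ} {a b : V × V} {j : ℕ} (h : HNode ℓ a i = Sum.inr (b, j)) :
    a = b ∧ i = j ∧ i ≠ 0 ∧ i ≠ ℓ := by
  unfold HNode at h
  split_ifs at h with h1 h2 <;> simp_all

lemma hnode_eq_inl {ℓ i : ℕ} {a : V × V} {v : V} (h : HNode ℓ a i = Sum.inl v) :
    (i = 0 ∧ v = a.1) ∨ (i = ℓ ∧ v = a.2) := by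
  unfold HNode at h
  split_ifs at h with h1 h2 <;> simp_all

lemma patharcs_inj {ℓ : ℕ} {a b : V × V} {i j : ℕ} (hi : i < ℓ) (hj : j < ℓ)
    (h : (HNode ℓ a i, HNode ℓ a (i + 1)) = (HNode ℓ b j, HNode ℓ b (j + 1))) :
    a = b ∧ i = j := by
  rw [Prod.mk.injEq] at h
  obtain ⟨h1, h2⟩ := h
  rcases Nat.eq_zero_or_pos i with rfl | hipos
  · rw [hnode_zero] at h1
    rcases hnode_eq_inl h1.symm with ⟨hj0, hv⟩ | ⟨hjℓ, _⟩
    · subst hj0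
      refine ⟨?_, rfl⟩
      have h2' : HNode ℓ a 1 = HNode ℓ b 1 := h2
      by_cases h1ℓ : 1 = ℓ
      · subst h1ℓ
        rw [hnode_last one_ne_zero, hnode_last one_ne_zero] at h2'
        exact Prod.ext hv (Sum.inl.inj h2')
      · rw [hnode_mid one_ne_zero h1ℓ, hnode_mid one_ne_zero h1ℓ] at h2'
        exact ((Prod.mk.injEq _ _ _ _).mp (Sum.inr.inj h2')).1
    · omega
  · rw [hnode_mid (by omega) (by omega)] at h1
    obtain ⟨hab, hij, _, _⟩ := hnode_eq_inr h1.symm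
    exact ⟨hab.symm, hij.symm⟩

lemma patharcs_disjoint {ℓ : ℕ} {a b : V × V} (hab : a ≠ b) :
    Disjoint (PathArcs ℓ a) (PathArcs ℓ b) := by
  rw [Set.disjoint_left]
  rintro p ⟨i, hi, rfl⟩ ⟨j, hj, hpj⟩
  exact hab (patharcs_inj hi hj hpj).1

lemma patharcs_eq_image (ℓ : ℕ) (a : V × V) :
    PathArcs ℓ a = (fun i => (HNode ℓ a i, HNode ℓ a (i + 1))) '' (Set.Iio ℓ) := by
  ext p
  simp only [PathArcs, Set.mem_setOf_eq, Set.mem_image, Set.mem_Iio]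
  constructor
  · rintro ⟨i, hi, rfl⟩; exact ⟨i, hi, rfl⟩
  · rintro ⟨i, hi, rfl⟩; exact ⟨i, hi, rfl⟩

lemma patharcs_finite (ℓ : ℕ) (a : V × V) : (PathArcs ℓ a).Finite := by
  rw [patharcs_eq_image]
  exact (Set.finite_Iio _).image _

lemma patharcs_ncard (ℓ : ℕ) (a : V × V) : (PathArcs ℓ a).ncard = ℓ := by
  rw [patharcs_eq_image, Set.ncard_image_of_injOn]
  · rw [show Set.Iio ℓ = ↑(Finset.Iio ℓ) by simp, Set.ncard_coe_finset, Nat.card_Iio]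
  · intro i hi j hj hij
    exact (patharcs_inj hi hj hij).2


open Relation

variable {ℓ : ℕ} {A : Set (V × V)} {F' : Set (HW V × HW V)}

/-- arcs of `G` whose whole path avoids `F'` and which belong to `A`. -/
def phi (A : Set (V × V)) (ℓ : ℕ) (F' : Set (HW V × HW V)) : Set (V × V) :=
  {a | a ∈ A ∧ (F' ∩ PathArcs ℓ a).Nonempty}

lemma phi_subset : phi A ℓ F' ⊆ A := fun _ h => h.1

lemma mem_harcs_diff {x y : HW V} (h : (x, y) ∈ HArcs A ℓ \ F') :
    ∃ b ∈ A, ∃ k < ℓ, x = HNode ℓ b k ∧ y = HNode ℓ b (k + 1) ∧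
      (HNode ℓ b k, HNode ℓ b (k + 1)) ∉ F' := by
  obtain ⟨h1, h2⟩ := h
  simp only [HArcs, Set.mem_iUnion] at h1
  obtain ⟨b, hb, i, hi, heq⟩ := h1
  rw [Prod.mk.injEq] at heq
  exact ⟨b, hb, i, hi, heq.1, heq.2, by rw [← heq.1, ← heq.2]; exact h2⟩

lemma mem_notin_of_diff {u w : V} (h : (u, w) ∈ A \ phi A ℓ F') :
    (u, w) ∈ A ∧ ∀ p ∈ PathArcs ℓ (u, w), p ∉ F' := by
  obtain ⟨h1, h2⟩ := h
  refine ⟨h1, fun p hp hpF => h2 ⟨h1, p, hpF, hp⟩⟩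

/-- Lifting a `G`-arc whose path avoids `F'` to a transitive chain in `H' \ F'`. -/
lemma lift_arc (hℓ : 1 ≤ ℓ) {a : V × V} (ha : a ∈ A)
    (hpa : ∀ p ∈ PathArcs ℓ a, p ∉ F') :
    TransGen (fun x y : HW V => (x, y) ∈ HArcs A ℓ \ F') (Sum.inl a.1) (Sum.inl a.2) := by
  set R' := fun x y : HW V => (x, y) ∈ HArcs A ℓ \ F' with hR'
  have key : ∀ n i, i + n = ℓ → i < ℓ → TransGen R' (HNode ℓ a i) (Sum.inl a.2) := by
    intro n
    induction n with
    | zero => intro i h hi; omega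
    | succ n ih =>
      intro i h hi
      have hmem : (HNode ℓ a i, HNode ℓ a (i + 1)) ∈ PathArcs ℓ a := ⟨i, hi, rfl⟩
      have harc : R' (HNode ℓ a i) (HNode ℓ a (i + 1)) :=
        ⟨Set.mem_biUnion ha hmem, hpa _ hmem⟩
      rcases Nat.lt_or_ge (i + 1) ℓ with h2 | h2
      · exact (ih (i + 1) (by omega) h2).head harc
      · have hiℓ : i + 1 = ℓ := by omega
        rw [hiℓ, hnode_last (by omega)] at harc
        exact TransGen.single harc
  have h0 := key ℓ 0 (by omega) (by omega)
  rwa [hnode_zero] at h0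

lemma lift_cycle (hℓ : 1 ≤ ℓ) {v w : V}
    (h : TransGen (fun u w : V => (u, w) ∈ A \ phi A ℓ F') v w) :
    TransGen (fun x y : HW V => (x, y) ∈ HArcs A ℓ \ F') (Sum.inl v) (Sum.inl w) := by
  induction h with
  | single h =>
    obtain ⟨h1, h2⟩ := mem_notin_of_diff h
    exact lift_arc hℓ h1 h2
  | tail h1 h2 ih =>
    obtain ⟨g1, g2⟩ := mem_notin_of_diff h2
    exact ih.trans (lift_arc hℓ g1 g2)

/-- Backward projection invariant. -/
lemma proj (hℓ : 1 ≤ ℓ) {x : HW V} {v : V}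
    (h : TransGen (fun x y : HW V => (x, y) ∈ HArcs A ℓ \ F') x (Sum.inl v)) :
    (∃ u, x = Sum.inl u ∧ TransGen (fun u w : V => (u, w) ∈ A \ phi A ℓ F') u v) ∨
    (∃ a i, a ∈ A ∧ 0 < i ∧ i < ℓ ∧ x = Sum.inr (a, i) ∧
      (∀ j, i ≤ j → j < ℓ → (HNode ℓ a j, HNode ℓ a (j + 1)) ∉ F') ∧
      ReflTransGen (fun u w : V => (u, w) ∈ A \ phi A ℓ F') a.2 v) := by
  set R0 := fun u w : V => (u, w) ∈ A \ phi A ℓ F' with hR0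
  induction h using TransGen.head_induction_on with
  | single hxy =>
    obtain ⟨b, hb, k, hk, hx, hy, hnF⟩ := mem_harcs_diff hxy
    rcases hnode_eq_inl hy.symm with ⟨hk0, _⟩ | ⟨hkℓ, hv⟩
    · omega
    · have hk' : k = ℓ - 1 := by omega
      rcases Nat.eq_or_lt_of_le hℓ with h1 | h1
      · -- ℓ = 1, k = 0
        left
        have hk0 : k = 0 := by omega
        subst hk0
        refine ⟨b.1, by rw [hx, hnode_zero], TransGen.single ?_⟩
        rw [hv]
        refine ⟨hb, fun hmem => ?_⟩
        obtain ⟨_, p, hpF, j, hj, hpj⟩ := hmem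
        have hj0 : j = 0 := by omega
        subst hj0
        exact hnF (hpj ▸ hpF)
      · -- ℓ ≥ 2
        right
        refine ⟨b, k, hb, by omega, hk, by rw [hx, hnode_mid (by omega) (by omega)], ?_, ?_⟩
        · intro j hj1 hj2
          have : j = k := by omega
          subst this
          exact hnF
        · rw [hv]
  | head hxy htail ihp =>
    obtain ⟨b, hb, k, hk, hx, hy, hnF⟩ := mem_harcs_diff hxy
    rcases ihp with ⟨u, hu, htg⟩ | ⟨a, i, ha, hi0, hiℓ, hyy, hsuf, hrt⟩
    · -- y = inl u, so k+1 = ℓ, u = b.2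
      rw [hu] at hy
      rcases hnode_eq_inl hy.symm with ⟨hk0, _⟩ | ⟨hkℓ, hv⟩
      · omega
      · rcases Nat.eq_or_lt_of_le hℓ with h1 | h1
        · -- ℓ = 1
          left
          have hk0 : k = 0 := by omega
          subst hk0
          refine ⟨b.1, by rw [hx, hnode_zero], TransGen.head ?_ (hv ▸ htg)⟩
          refine ⟨hb, fun hmem => ?_⟩
          obtain ⟨_, p, hpF, j, hj, hpj⟩ := hmem
          have hj0 : j = 0 := by omega
          subst hj0
          exact hnF (hpj ▸ hpF)
        · right
          refine ⟨b, k, hb, by omega, hk, by rw [hx, hnode_mid (by omega) (by omega)], ?_, ?_⟩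
          · intro j hj1 hj2
            have : j = k := by omega
            subst this
            exact hnF
          · rw [← hv] at *; exact htg.to_reflTransGen
    · -- y = inr (a, i)
      rw [hyy] at hy
      obtain ⟨hba, hki, _, _⟩ := hnode_eq_inr hy.symm
      subst hba
      have hki' : k + 1 = i := hki
      rcases Nat.eq_zero_or_pos k with hk0 | hkpos
      · -- k = 0 : full path avoided
        left
        subst hk0
        refine ⟨b.1, by rw [hx, hnode_zero], TransGen.head' ?_ hrt⟩
        refine ⟨hb, fun hmem => ?_⟩
        obtain ⟨_, p, hpF, j, hj, hpj⟩ := hmem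
        subst hpj
        rcases Nat.eq_zero_or_pos j with hj0 | hjpos
        · subst hj0; exact hnF hpF
        · exact hsuf j (by omega) hj hpF
      · right
        refine ⟨b, k, hb, hkpos, hk, by rw [hx, hnode_mid (by omega) (by omega)], ?_, hrt⟩
        intro j hj1 hj2
        rcases Nat.eq_or_lt_of_le hj1 with rfl | hlt
        · exact hnF
        · exact hsuf j (by omega) hj2

lemma succ_unique {a : V × V} {i : ℕ} {y : HW V}
    (h : (Sum.inr (a, i), y) ∈ HArcs A ℓ \ F') :
    y = HNode ℓ a (i + 1) ∧ 0 < i ∧ i < ℓ := by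
  obtain ⟨b, hb, k, hk, hx, hy, _⟩ := mem_harcs_diff h
  obtain ⟨hba, hki, hk0, _⟩ := hnode_eq_inr hx.symm
  subst hba
  subst hki
  exact ⟨hy, by omega, hk⟩

lemma rot (hℓ : 1 ≤ ℓ) :
    ∀ (n : ℕ) (a : V × V) (i : ℕ), ℓ - i ≤ n →
    TransGen (fun x y : HW V => (x, y) ∈ HArcs A ℓ \ F') (Sum.inr (a, i)) (Sum.inr (a, i)) →
    ∃ v : V, TransGen (fun x y : HW V => (x, y) ∈ HArcs A ℓ \ F') (Sum.inl v) (Sum.inl v) := by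
  intro n
  induction n with
  | zero =>
    intro a i hn h
    obtain ⟨y, hxy, _⟩ := TransGen.head'_iff.mp h
    obtain ⟨_, _, hiℓ⟩ := succ_unique hxy
    omega
  | succ n ih =>
    intro a i hn h
    obtain ⟨y, hxy, hyx⟩ := TransGen.head'_iff.mp h
    obtain ⟨hy, hi0, hiℓ⟩ := succ_unique hxy
    subst hy
    have hcyc : TransGen (fun x y : HW V => (x, y) ∈ HArcs A ℓ \ F')
        (HNode ℓ a (i + 1)) (HNode ℓ a (i + 1)) := TransGen.tail' hyx hxy
    rcases Nat.lt_or_ge (i + 1) ℓ with h2 | h2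
    · rw [hnode_mid (by omega) (by omega)] at hcyc
      exact ih a (i + 1) (by omega) hcyc
    · have : i + 1 = ℓ := by omega
      rw [this, hnode_last (by omega)] at hcyc
      exact ⟨a.2, hcyc⟩

lemma acyclic_iff (hℓ : 1 ≤ ℓ) (A : Set (V × V)) (F' : Set (HW V × HW V)) :
    Acyclic (HArcs A ℓ \ F') ↔ Acyclic (A \ phi A ℓ F') := by
  constructor
  · intro hH v hcyc
    exact hH (Sum.inl v) (lift_cycle hℓ hcyc)
  · intro hG x hcyc
    match x with
    | Sum.inl v =>
      rcases proj hℓ hcyc with ⟨u, hu, htg⟩ | ⟨a, i, _, _, _, hx, _, _⟩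
      · rw [Sum.inl.injEq] at hu
        exact hG v (hu ▸ htg)
      · exact absurd hx (by simp)
    | Sum.inr (a, i) =>
      obtain ⟨v, hcyc'⟩ := rot hℓ (ℓ - i) a i le_rfl hcyc
      rcases proj hℓ hcyc' with ⟨u, hu, htg⟩ | ⟨b, j, _, _, _, hx, _, _⟩
      · rw [Sum.inl.injEq] at hu
        exact hG v (hu ▸ htg)
      · exact absurd hx (by simp)

lemma ncard_prod' {α β : Type*} (s : Set α) (t : Set β) :
    (s ×ˢ t).ncard = s.ncard * t.ncard := by
  rw [← Nat.card_coe_set_eq, ← Nat.card_coe_set_eq, ← Nat.card_coe_set_eq,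
    ← Nat.card_prod]
  exact Nat.card_congr (Equiv.Set.prod s t)

lemma count_nonempty_subsets (hℓ : 1 ≤ ℓ) (b : V × V) :
    {S : Set (HW V × HW V) | S ⊆ PathArcs ℓ b ∧ S.Nonempty}.ncard = 2 ^ ℓ - 1 := by
  classical
  have hfin := patharcs_finite ℓ b
  have hsubfin : {S : Set (HW V × HW V) | S ⊆ PathArcs ℓ b}.Finite := hfin.finite_subsets
  have h2 : {S : Set (HW V × HW V) | S ⊆ PathArcs ℓ b}.ncard = 2 ^ ℓ := by
    have him : {S : Set (HW V × HW V) | S ⊆ PathArcs ℓ b} =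
        (fun t : Finset (HW V × HW V) => (↑t : Set (HW V × HW V))) '' ↑hfin.toFinset.powerset := by
      ext S
      simp only [Set.mem_setOf_eq, Set.mem_image, Finset.mem_coe, Finset.mem_powerset]
      constructor
      · intro hS
        refine ⟨(hfin.subset hS).toFinset, ?_, by simp⟩
        intro p hp
        simp only [Set.Finite.mem_toFinset] at hp ⊢
        exact hS hp
      · rintro ⟨t, ht, rfl⟩ p hp
        have := ht hp
        simpa using this
    rw [him, Set.ncard_image_of_injOn (fun x _ y _ h => Finset.coe_injective h),
      Set.ncard_coe_finset, Finset.card_powerset]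
    congr 1
    rw [← Set.ncard_eq_toFinset_card _ hfin, patharcs_ncard]
  have h1 : {S : Set (HW V × HW V) | S ⊆ PathArcs ℓ b} =
      insert ∅ {S : Set (HW V × HW V) | S ⊆ PathArcs ℓ b ∧ S.Nonempty} := by
    ext S
    by_cases hS : S = ∅
    · subst hS; simp
    · simp [hS, Set.nonempty_iff_ne_empty]
  rw [h1, Set.ncard_insert_of_notMem (by simp [Set.not_nonempty_empty])
    (hsubfin.subset fun _ h => h.1)] at h2
  omega

lemma count_units (hℓ : 1 ≤ ℓ) (s : Finset (V × V)) :
    {F' : Set (HW V × HW V) | F' ⊆ (⋃ a ∈ (s : Set (V × V)), PathArcs ℓ a) ∧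
      ∀ a ∈ s, (F' ∩ PathArcs ℓ a).Nonempty}.ncard = (2 ^ ℓ - 1) ^ s.card := by
  classical
  induction s using Finset.induction with
  | empty =>
    have : {F' : Set (HW V × HW V) | F' ⊆ (⋃ a ∈ ((∅ : Finset (V × V)) : Set (V × V)),
        PathArcs ℓ a) ∧ ∀ a ∈ (∅ : Finset (V × V)), (F' ∩ PathArcs ℓ a).Nonempty} =
        {(∅ : Set (HW V × HW V))} := by
      ext F'
      simp [Set.subset_empty_iff]
    rw [this, Set.ncard_singleton, Finset.card_empty, pow_zero]
  | @insert b s hb ih =>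
    set E := {S : Set (HW V × HW V) | S ⊆ PathArcs ℓ b ∧ S.Nonempty} with hE
    set N := {F' : Set (HW V × HW V) | F' ⊆ (⋃ a ∈ (s : Set (V × V)), PathArcs ℓ a) ∧
      ∀ a ∈ s, (F' ∩ PathArcs ℓ a).Nonempty} with hN
    have hTdisj : ∀ T ∈ N, Disjoint T (PathArcs ℓ b) := by
      intro T hT
      refine Set.disjoint_left.mpr fun p hpT hpb => ?_
      obtain ⟨a, ha, hpa⟩ := Set.mem_iUnion₂.mp (hT.1 hpT)
      exact Set.disjoint_left.mp (patharcs_disjoint (a := a) (b := b) (fun h => hb (h ▸ ha))) hpa hpb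
    have himg : {F' : Set (HW V × HW V) | F' ⊆ (⋃ a ∈ ((insert b s : Finset (V × V)) :
        Set (V × V)), PathArcs ℓ a) ∧ ∀ a ∈ insert b s, (F' ∩ PathArcs ℓ a).Nonempty} =
        (fun ST : Set (HW V × HW V) × Set (HW V × HW V) => ST.1 ∪ ST.2) '' (E ×ˢ N) := by
      ext F'
      simp only [Set.mem_setOf_eq, Set.mem_image, Set.mem_prod, Finset.coe_insert,
        Finset.mem_insert]
      constructor
      · rintro ⟨hsub, hne⟩
        refine ⟨(F' ∩ PathArcs ℓ b, F' \ PathArcs ℓ b), ⟨⟨Set.inter_subset_right, hne b (Or.inl rfl)⟩, ?_, ?_⟩, by simp⟩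
        · intro p hp
          obtain ⟨hpF, hpb⟩ := hp
          obtain ⟨a, ha, hpa⟩ := Set.mem_iUnion₂.mp (hsub hpF)
          rcases Set.mem_insert_iff.mp ha with rfl | has
          · exact absurd hpa hpb
          · exact Set.mem_biUnion has hpa
        · intro a has
          obtain ⟨p, hpF, hpa⟩ := hne a (Or.inr has)
          have hpb : p ∉ PathArcs ℓ b :=
            fun hpb => Set.disjoint_left.mp (patharcs_disjoint (a := a) (b := b) (fun h => hb (h ▸ has))) hpa hpb
          exact ⟨p, ⟨hpF, hpb⟩, hpa⟩
      · rintro ⟨⟨S, T⟩, ⟨⟨hSb, hSne⟩, hTN⟩, rfl⟩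
        refine ⟨?_, ?_⟩
        · intro p hp
          rcases hp with hpS | hpT
          · exact Set.mem_biUnion (Set.mem_insert b _) (hSb hpS)
          · obtain ⟨a, ha, hpa⟩ := Set.mem_iUnion₂.mp (hTN.1 hpT)
            exact Set.mem_biUnion (Set.mem_insert_iff.mpr (Or.inr ha)) hpa
        · intro a ha
          rcases ha with rfl | has
          · obtain ⟨p, hp⟩ := hSne
            exact ⟨p, Or.inl hp, hSb hp⟩
          · obtain ⟨p, hpT, hpa⟩ := hTN.2 a has
            exact ⟨p, Or.inr hpT, hpa⟩
    have hinj : Set.InjOn (fun ST : Set (HW V × HW V) × Set (HW V × HW V) => ST.1 ∪ ST.2)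
        (E ×ˢ N) := by
      rintro ⟨S, T⟩ ⟨⟨hSb, _⟩, hTN⟩ ⟨S', T'⟩ ⟨⟨hSb', _⟩, hTN'⟩ heq
      simp only at heq
      have hS : S = (S ∪ T) ∩ PathArcs ℓ b := by
        rw [Set.union_inter_distrib_right, (hTdisj T hTN).inter_eq,
          Set.inter_eq_self_of_subset_left hSb, Set.union_empty]
      have hS' : S' = (S' ∪ T') ∩ PathArcs ℓ b := by
        rw [Set.union_inter_distrib_right, (hTdisj T' hTN').inter_eq,
          Set.inter_eq_self_of_subset_left hSb', Set.union_empty]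
      have hT : T = (S ∪ T) \ PathArcs ℓ b := by
        rw [Set.union_diff_distrib, Set.diff_eq_empty.mpr hSb,
          (hTdisj T hTN).sdiff_eq_left, Set.empty_union]
      have hT' : T' = (S' ∪ T') \ PathArcs ℓ b := by
        rw [Set.union_diff_distrib, Set.diff_eq_empty.mpr hSb',
          (hTdisj T' hTN').sdiff_eq_left, Set.empty_union]
      have h1 : S = S' := by rw [hS, hS', heq]
      have h2 : T = T' := by rw [hT, hT', heq]
      rw [Prod.mk.injEq]
      exact ⟨h1, h2⟩
    rw [himg, Set.ncard_image_of_injOn hinj, ncard_prod', ih, hE,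
      count_nonempty_subsets hℓ b, Finset.card_insert_of_notMem hb, pow_succ]
    ring

lemma isfas_harcs_iff (hℓ : 1 ≤ ℓ) (A : Set (V × V)) (F' : Set (HW V × HW V)) :
    IsFAS (HArcs A ℓ) F' ↔ F' ⊆ HArcs A ℓ ∧ IsFAS A (phi A ℓ F') := by
  unfold IsFAS
  rw [acyclic_iff hℓ]
  constructor
  · rintro ⟨h1, h2⟩; exact ⟨h1, phi_subset, h2⟩
  · rintro ⟨h1, _, h2⟩; exact ⟨h1, h2⟩

lemma fiber_eq (hℓ : 1 ≤ ℓ) {A F : Set (V × V)} (hF : IsFAS A F) :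
    {F' : Set (HW V × HW V) | IsFAS (HArcs A ℓ) F' ∧ phi A ℓ F' = F} =
    {F' : Set (HW V × HW V) | F' ⊆ (⋃ a ∈ F, PathArcs ℓ a) ∧
      ∀ a ∈ F, (F' ∩ PathArcs ℓ a).Nonempty} := by
  ext F'
  simp only [Set.mem_setOf_eq, isfas_harcs_iff hℓ]
  constructor
  · rintro ⟨⟨hsub, _⟩, hphi⟩
    refine ⟨?_, ?_⟩
    · intro p hp
      obtain ⟨b, hb, hpb⟩ := Set.mem_iUnion₂.mp (hsub hp)
      have hmem : b ∈ phi A ℓ F' := ⟨hb, p, hp, hpb⟩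
      exact Set.mem_biUnion (hphi ▸ hmem) hpb
    · intro a ha
      have hmem : a ∈ phi A ℓ F' := hphi ▸ ha
      exact hmem.2
  · rintro ⟨hsub, hne⟩
    have hphi : phi A ℓ F' = F := by
      apply Set.Subset.antisymm
      · rintro a ⟨haA, p, hpF, hpa⟩
        obtain ⟨b, hbF, hpb⟩ := Set.mem_iUnion₂.mp (hsub hpF)
        rcases eq_or_ne a b with rfl | hab
        · exact hbF
        · exact absurd hpb (Set.disjoint_left.mp (patharcs_disjoint hab) hpa)
      · intro a ha
        exact ⟨hF.1 ha, hne a ha⟩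
    refine ⟨⟨?_, ?_⟩, hphi⟩
    · intro p hp
      obtain ⟨b, hbF, hpb⟩ := Set.mem_iUnion₂.mp (hsub hp)
      exact Set.mem_biUnion (hF.1 hbF) hpb
    · rw [hphi]; exact hF

lemma fiber_card (hℓ : 1 ≤ ℓ) {A F : Set (V × V)} (hF : IsFAS A F) (hFfin : F.Finite) :
    {F' : Set (HW V × HW V) | IsFAS (HArcs A ℓ) F' ∧ phi A ℓ F' = F}.ncard =
    (2 ^ ℓ - 1) ^ F.ncard := by
  rw [fiber_eq hℓ hF]
  have h1 : {F' : Set (HW V × HW V) | F' ⊆ (⋃ a ∈ F, PathArcs ℓ a) ∧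
      ∀ a ∈ F, (F' ∩ PathArcs ℓ a).Nonempty} =
      {F' : Set (HW V × HW V) | F' ⊆ (⋃ a ∈ (hFfin.toFinset : Set (V × V)), PathArcs ℓ a) ∧
      ∀ a ∈ hFfin.toFinset, (F' ∩ PathArcs ℓ a).Nonempty} := by
    simp only [Set.Finite.coe_toFinset, Set.Finite.mem_toFinset]
  rw [h1, count_units hℓ, Set.ncard_eq_toFinset_card _ hFfin]

end FasAux

/-- the total number of feedback arc sets of `H'(ℓ)` equals
`Σ_{i=0}^{|A|} F_i(G)·(2^ℓ − 1)^i` where `F_i(G)` is the number of feedback arc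
sets of `G` of cardinality exactly `i`. -/
theorem count_fas_subdivision {V : Type*} [Fintype V] (A : Set (V × V))
    (hloopless : ∀ v : V, (v, v) ∉ A) (ℓ : ℕ) (hℓ : 1 ≤ ℓ) :
    {F' : Set ((V ⊕ ((V × V) × ℕ)) × (V ⊕ ((V × V) × ℕ))) |
        IsFAS (HArcs A ℓ) F'}.ncard =
      ∑ i ∈ Finset.range (A.ncard + 1),
        {F : Set (V × V) | IsFAS A F ∧ F.ncard = i}.ncard * (2 ^ ℓ - 1) ^ i := by
  classical
  have hAfin : A.Finite := Set.toFinite A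
  have hUfin : (HArcs A ℓ).Finite :=
    Set.Finite.biUnion hAfin fun a _ => FasAux.patharcs_finite ℓ a
  have hLfin : {F' : Set ((V ⊕ ((V × V) × ℕ)) × (V ⊕ ((V × V) × ℕ))) |
      IsFAS (HArcs A ℓ) F'}.Finite :=
    hUfin.finite_subsets.subset fun F' hF' => hF'.1
  have hGfin : {F : Set (V × V) | IsFAS A F}.Finite :=
    hAfin.finite_subsets.subset fun F hF => hF.1
  set LF := hLfin.toFinset with hLF
  set TF := hGfin.toFinset with hTF
  have hmaps : ∀ F' ∈ LF, FasAux.phi A ℓ F' ∈ TF := by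
    intro F' h
    rw [Set.Finite.mem_toFinset] at h ⊢
    exact ((FasAux.isfas_harcs_iff hℓ A F').mp h).2
  have hLHS : {F' : Set ((V ⊕ ((V × V) × ℕ)) × (V ⊕ ((V × V) × ℕ))) |
      IsFAS (HArcs A ℓ) F'}.ncard = LF.card := Set.ncard_eq_toFinset_card _ hLfin
  rw [hLHS, Finset.card_eq_sum_card_fiberwise hmaps]
  have hfib : ∀ F ∈ TF, (LF.filter (fun F' => FasAux.phi A ℓ F' = F)).card
      = (2 ^ ℓ - 1) ^ F.ncard := by
    intro F hF
    rw [Set.Finite.mem_toFinset] at hF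
    have hset : ((LF.filter (fun F' => FasAux.phi A ℓ F' = F)) :
        Set (Set ((V ⊕ ((V × V) × ℕ)) × (V ⊕ ((V × V) × ℕ))))) =
        {F' : Set ((V ⊕ ((V × V) × ℕ)) × (V ⊕ ((V × V) × ℕ))) |
          IsFAS (HArcs A ℓ) F' ∧ FasAux.phi A ℓ F' = F} := by
      ext F'
      simp [hLF, Set.Finite.mem_toFinset]
    have hcard := FasAux.fiber_card hℓ hF (hAfin.subset hF.1)
    rw [← hset, Set.ncard_coe_finset] at hcard
    exact hcard
  rw [Finset.sum_congr rfl hfib]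
  have hRHS : ∀ i, {F : Set (V × V) | IsFAS A F ∧ F.ncard = i}.ncard =
      (TF.filter (fun F => F.ncard = i)).card := by
    intro i
    rw [← Set.ncard_coe_finset]
    congr 1
    ext F
    simp [hTF, Set.Finite.mem_toFinset]
  simp only [hRHS]
  rw [← Finset.sum_fiberwise_of_maps_to (g := Set.ncard) (t := Finset.range (A.ncard + 1))
      (fun F hF => Finset.mem_range.mpr (Nat.lt_succ_of_le (Set.ncard_le_ncard
        ((Set.Finite.mem_toFinset _).mp hF).1 hAfin)))
      (fun F => (2 ^ ℓ - 1) ^ F.ncard)]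
  apply Finset.sum_congr rfl
  intro i _
  rw [Finset.sum_congr rfl (fun F hF => by rw [(Finset.mem_filter.mp hF).2]),
    Finset.sum_const, smul_eq_mul]
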